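/- Let p, e be C² real-valued functions and s a C² real-valued function on (0,∞)² satisfying Gibbs' relation, and suppose the monoatomic gas relation p(ρ,θ) = (2/3)·ρ·e(ρ,θ) holds for all ρ, θ > 0. Then p satisfies the Euler-type first-order partial differential equation 3ρ·∂p/∂ρ(ρ,θ) + 2θ·∂p/∂θ(ρ,θ) = 5·p(ρ,θ) for all ρ, θ > 0. -/

import Mathlib

open Set Filter

private lemma hasDerivAt_p1 {F : ℝ × ℝ → ℝ} {ρ θ : ℝ}
    (hF : DifferentiableAt ℝ F (ρ, θ)) :
    HasDerivAt (fun r => F (r, θ)) (fderiv ℝ F (ρ, θ) (1, 0)) ρ := by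
  have h1 : HasDerivAt (fun r : ℝ => ((r, θ) : ℝ × ℝ)) ((1 : ℝ), (0 : ℝ)) ρ :=
    (hasDerivAt_id ρ).prodMk (hasDerivAt_const ρ θ)
  exact hF.hasFDerivAt.comp_hasDerivAt ρ h1

private lemma hasDerivAt_p2 {F : ℝ × ℝ → ℝ} {ρ θ : ℝ}
    (hF : DifferentiableAt ℝ F (ρ, θ)) :
    HasDerivAt (fun t => F (ρ, t)) (fderiv ℝ F (ρ, θ) (0, 1)) θ := by
  have h1 : HasDerivAt (fun t : ℝ => ((ρ, t) : ℝ × ℝ)) ((0 : ℝ), (1 : ℝ)) θ :=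
    (hasDerivAt_const θ ρ).prodMk (hasDerivAt_id θ)
  exact hF.hasFDerivAt.comp_hasDerivAt θ h1

private lemma hasDerivAt_fderiv_p1 {F : ℝ × ℝ → ℝ} {ρ θ : ℝ} (v : ℝ × ℝ)
    (hF : ContDiffAt ℝ 2 F (ρ, θ)) :
    HasDerivAt (fun r => fderiv ℝ F (r, θ) v)
      (fderiv ℝ (fderiv ℝ F) (ρ, θ) (1, 0) v) ρ := by
  have hd : DifferentiableAt ℝ (fderiv ℝ F) (ρ, θ) :=
    (hF.fderiv_right (m := 1) (by norm_num)).differentiableAt one_ne_zero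
  have h1 : HasDerivAt (fun r : ℝ => ((r, θ) : ℝ × ℝ)) ((1 : ℝ), (0 : ℝ)) ρ :=
    (hasDerivAt_id ρ).prodMk (hasDerivAt_const ρ θ)
  have h2 : HasDerivAt (fun r => fderiv ℝ F (r, θ))
      (fderiv ℝ (fderiv ℝ F) (ρ, θ) (1, 0)) ρ :=
    hd.hasFDerivAt.comp_hasDerivAt ρ h1
  have := h2.clm_apply (hasDerivAt_const ρ v)
  simpa using this

private lemma hasDerivAt_fderiv_p2 {F : ℝ × ℝ → ℝ} {ρ θ : ℝ} (v : ℝ × ℝ)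
    (hF : ContDiffAt ℝ 2 F (ρ, θ)) :
    HasDerivAt (fun t => fderiv ℝ F (ρ, t) v)
      (fderiv ℝ (fderiv ℝ F) (ρ, θ) (0, 1) v) θ := by
  have hd : DifferentiableAt ℝ (fderiv ℝ F) (ρ, θ) :=
    (hF.fderiv_right (m := 1) (by norm_num)).differentiableAt one_ne_zero
  have h1 : HasDerivAt (fun t : ℝ => ((ρ, t) : ℝ × ℝ)) ((0 : ℝ), (1 : ℝ)) θ :=
    (hasDerivAt_const θ ρ).prodMk (hasDerivAt_id θ)
  have h2 : HasDerivAt (fun t => fderiv ℝ F (ρ, t))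
      (fderiv ℝ (fderiv ℝ F) (ρ, θ) (0, 1)) θ :=
    hd.hasFDerivAt.comp_hasDerivAt θ h1
  have := h2.clm_apply (hasDerivAt_const θ v)
  simpa using this


/-- **Euler-type PDE for the pressure of a monoatomic gas.**
If `p`, `e`, `s` are `C²` on `(0,∞)²`, satisfy Gibbs' relation, and the monoatomic
equation of state `p = (2/3) ρ e` holds, then `3ρ ∂p/∂ρ + 2θ ∂p/∂θ = 5 p`. -/
theorem monoatomic_pressure_pde
    (p e s : ℝ → ℝ → ℝ)
    (hp : ContDiffOn ℝ 2 (fun x : ℝ × ℝ => p x.1 x.2) {x : ℝ × ℝ | 0 < x.1 ∧ 0 < x.2})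
    (he : ContDiffOn ℝ 2 (fun x : ℝ × ℝ => e x.1 x.2) {x : ℝ × ℝ | 0 < x.1 ∧ 0 < x.2})
    (hs : ContDiffOn ℝ 2 (fun x : ℝ × ℝ => s x.1 x.2) {x : ℝ × ℝ | 0 < x.1 ∧ 0 < x.2})
    (gibbs_θ : ∀ ρ θ : ℝ, 0 < ρ → 0 < θ →
      θ * deriv (fun t => s ρ t) θ = deriv (fun t => e ρ t) θ)
    (gibbs_ρ : ∀ ρ θ : ℝ, 0 < ρ → 0 < θ →
      θ * deriv (fun r => s r θ) ρ = deriv (fun r => e r θ) ρ - p ρ θ / ρ ^ 2)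
    (mono : ∀ ρ θ : ℝ, 0 < ρ → 0 < θ → p ρ θ = 2 / 3 * ρ * e ρ θ) :
    ∀ ρ θ : ℝ, 0 < ρ → 0 < θ →
      3 * ρ * deriv (fun r => p r θ) ρ + 2 * θ * deriv (fun t => p ρ t) θ = 5 * p ρ θ := by
  intro ρ θ hρ hθ
  set U : Set (ℝ × ℝ) := {x : ℝ × ℝ | 0 < x.1 ∧ 0 < x.2} with hU
  have hUo : IsOpen U := by
    have : U = (fun x : ℝ × ℝ => x.1) ⁻¹' (Ioi 0) ∩ (fun x : ℝ × ℝ => x.2) ⁻¹' (Ioi 0) := rfl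
    rw [this]
    exact (isOpen_Ioi.preimage continuous_fst).inter (isOpen_Ioi.preimage continuous_snd)
  set P : ℝ × ℝ → ℝ := fun x => p x.1 x.2 with hPdef
  set E : ℝ × ℝ → ℝ := fun x => e x.1 x.2 with hEdef
  set S : ℝ × ℝ → ℝ := fun x => s x.1 x.2 with hSdef
  have hx₀ : ((ρ, θ) : ℝ × ℝ) ∈ U := ⟨hρ, hθ⟩
  -- ContDiffAt / DifferentiableAt facts on U
  have hpA : ∀ x ∈ U, ContDiffAt ℝ 2 P x := fun x hx => hp.contDiffAt (hUo.mem_nhds hx)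
  have heA : ∀ x ∈ U, ContDiffAt ℝ 2 E x := fun x hx => he.contDiffAt (hUo.mem_nhds hx)
  have hsA : ∀ x ∈ U, ContDiffAt ℝ 2 S x := fun x hx => hs.contDiffAt (hUo.mem_nhds hx)
  have hpD : ∀ x ∈ U, DifferentiableAt ℝ P x :=
    fun x hx => (hpA x hx).differentiableAt two_ne_zero
  have heD : ∀ x ∈ U, DifferentiableAt ℝ E x :=
    fun x hx => (heA x hx).differentiableAt two_ne_zero
  have hsD : ∀ x ∈ U, DifferentiableAt ℝ S x :=
    fun x hx => (hsA x hx).differentiableAt two_ne_zero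
  -- Gibbs relations in terms of fderiv, valid on all of U
  have eq1 : ∀ x ∈ U, x.2 * fderiv ℝ S x (0, 1) = fderiv ℝ E x (0, 1) := by
    rintro ⟨r, t⟩ hx
    have h1 := (hasDerivAt_p2 (hsD _ hx)).deriv
    have h2 := (hasDerivAt_p2 (heD _ hx)).deriv
    have := gibbs_θ r t hx.1 hx.2
    rw [show (fun u => s r u) = (fun u => S (r, u)) from rfl,
        show (fun u => e r u) = (fun u => E (r, u)) from rfl] at this
    rw [h1, h2] at this
    exact this
  have eq2 : ∀ x ∈ U, x.2 * fderiv ℝ S x (1, 0) = fderiv ℝ E x (1, 0) - P x / x.1 ^ 2 := by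
    rintro ⟨r, t⟩ hx
    have h1 := (hasDerivAt_p1 (hsD _ hx)).deriv
    have h2 := (hasDerivAt_p1 (heD _ hx)).deriv
    have := gibbs_ρ r t hx.1 hx.2
    rw [show (fun u => s u t) = (fun u => S (u, t)) from rfl,
        show (fun u => e u t) = (fun u => E (u, t)) from rfl] at this
    rw [h1, h2] at this
    exact this
  have eq3 : ∀ x ∈ U, P x = 2 / 3 * x.1 * E x := fun x hx => mono x.1 x.2 hx.1 hx.2
  -- eventual membership along the lines through (ρ, θ)
  have memρ : ∀ᶠ r in nhds ρ, ((r, θ) : ℝ × ℝ) ∈ U := by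
    have : Continuous (fun r : ℝ => ((r, θ) : ℝ × ℝ)) := continuous_id.prodMk continuous_const
    exact this.continuousAt.preimage_mem_nhds (hUo.mem_nhds hx₀)
  have memθ : ∀ᶠ t in nhds θ, ((ρ, t) : ℝ × ℝ) ∈ U := by
    have : Continuous (fun t : ℝ => ((ρ, t) : ℝ × ℝ)) := continuous_const.prodMk continuous_id
    exact this.continuousAt.preimage_mem_nhds (hUo.mem_nhds hx₀)
  -- shorthands
  set Pρ := fderiv ℝ P (ρ, θ) (1, 0)
  set Pθ := fderiv ℝ P (ρ, θ) (0, 1)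
  set Eρ := fderiv ℝ E (ρ, θ) (1, 0)
  set Sρ := fderiv ℝ S (ρ, θ) (1, 0)
  set S2 := fderiv ℝ (fderiv ℝ S) (ρ, θ)
  set E2 := fderiv ℝ (fderiv ℝ E) (ρ, θ)
  -- (I): differentiate eq1 in ρ-direction
  have I : θ * S2 (1, 0) (0, 1) = E2 (1, 0) (0, 1) := by
    have hL : HasDerivAt (fun r => θ * fderiv ℝ S (r, θ) (0, 1)) (θ * S2 (1, 0) (0, 1)) ρ :=
      (hasDerivAt_fderiv_p1 _ (hsA _ hx₀)).const_mul θ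
    have hR : HasDerivAt (fun r => fderiv ℝ E (r, θ) (0, 1)) (E2 (1, 0) (0, 1)) ρ :=
      hasDerivAt_fderiv_p1 _ (heA _ hx₀)
    have heq : (fun r => θ * fderiv ℝ S (r, θ) (0, 1)) =ᶠ[nhds ρ]
        (fun r => fderiv ℝ E (r, θ) (0, 1)) :=
      memρ.mono fun r hr => eq1 _ hr
    have := heq.deriv_eq
    rwa [hL.deriv, hR.deriv] at this
  -- (II): differentiate eq2 in θ-direction
  have II : Sρ + θ * S2 (0, 1) (1, 0) = E2 (0, 1) (1, 0) - Pθ / ρ ^ 2 := by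
    have hL : HasDerivAt (fun t => t * fderiv ℝ S (ρ, t) (1, 0))
        (1 * fderiv ℝ S (ρ, θ) (1, 0) + θ * S2 (0, 1) (1, 0)) θ :=
      (hasDerivAt_id θ).mul (hasDerivAt_fderiv_p2 _ (hsA _ hx₀))
    have hR : HasDerivAt (fun t => fderiv ℝ E (ρ, t) (1, 0) - P (ρ, t) / ρ ^ 2)
        (E2 (0, 1) (1, 0) - Pθ / ρ ^ 2) θ :=
      (hasDerivAt_fderiv_p2 _ (heA _ hx₀)).sub ((hasDerivAt_p2 (hpD _ hx₀)).div_const _)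
    have heq : (fun t => t * fderiv ℝ S (ρ, t) (1, 0)) =ᶠ[nhds θ]
        (fun t => fderiv ℝ E (ρ, t) (1, 0) - P (ρ, t) / ρ ^ 2) :=
      memθ.mono fun t ht => eq2 _ ht
    have := heq.deriv_eq
    rw [hL.deriv, hR.deriv] at this
    linarith [this]
  -- (III): differentiate eq3 in ρ-direction
  have III : Pρ = 2 / 3 * E (ρ, θ) + 2 / 3 * ρ * Eρ := by
    have hL : HasDerivAt (fun r => P (r, θ)) Pρ ρ := hasDerivAt_p1 (hpD _ hx₀)
    have hR : HasDerivAt (fun r => 2 / 3 * r * E (r, θ))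
        (2 / 3 * E (ρ, θ) + 2 / 3 * ρ * Eρ) ρ := by
      have h1 : HasDerivAt (fun r : ℝ => 2 / 3 * r) (2 / 3 : ℝ) ρ := by
        simpa using (hasDerivAt_id ρ).const_mul (2 / 3 : ℝ)
      have := h1.mul (hasDerivAt_p1 (heD _ hx₀))
      exact this
    have heq : (fun r => P (r, θ)) =ᶠ[nhds ρ] (fun r => 2 / 3 * r * E (r, θ)) :=
      memρ.mono fun r hr => eq3 _ hr
    have := heq.deriv_eq
    rwa [hL.deriv, hR.deriv] at this
  -- symmetry of second derivatives
  have symS : S2 (1, 0) (0, 1) = S2 (0, 1) (1, 0) :=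
    (hsA _ hx₀).isSymmSndFDerivAt (by norm_num) _ _
  have symE : E2 (1, 0) (0, 1) = E2 (0, 1) (1, 0) :=
    (heA _ hx₀).isSymmSndFDerivAt (by norm_num) _ _
  -- pointwise Gibbs and state equations at (ρ, θ)
  have V : θ * Sρ = Eρ - P (ρ, θ) / ρ ^ 2 := eq2 _ hx₀
  have VI : P (ρ, θ) = 2 / 3 * ρ * E (ρ, θ) := eq3 _ hx₀
  -- rewrite goal derivatives
  have gρ : deriv (fun r => p r θ) ρ = Pρ := (hasDerivAt_p1 (hpD _ hx₀)).deriv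
  have gθ : deriv (fun t => p ρ t) θ = Pθ := (hasDerivAt_p2 (hpD _ hx₀)).deriv
  rw [show (fun r => p r θ) = (fun r => P (r, θ)) from rfl] at gρ
  rw [show (fun t => p ρ t) = (fun t => P (ρ, t)) from rfl] at gθ
  rw [gρ, gθ]
  show 3 * ρ * Pρ + 2 * θ * Pθ = 5 * P (ρ, θ)
  -- algebra
  have hρ2 : (ρ : ℝ) ^ 2 ≠ 0 := pow_ne_zero 2 hρ.ne'
  have hθ0 : (θ : ℝ) ≠ 0 := hθ.ne'
  -- from I, symS, symE: θ * S2 (0,1)(1,0) = E2 (0,1)(1,0)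
  have I' : θ * S2 (0, 1) (1, 0) = E2 (0, 1) (1, 0) := by rw [← symS, ← symE]; exact I
  -- hence Sρ = -Pθ/ρ²
  have hSρ : Sρ = -(Pθ / ρ ^ 2) := by linarith [II, I']
  have hEρ : Eρ = P (ρ, θ) / ρ ^ 2 - θ * (Pθ / ρ ^ 2) := by
    rw [hSρ] at V
    linarith
  rw [III, hEρ]
  field_simp
  nlinarith [VI, sq_nonneg ρ]
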